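/- Let 1 < p < 2 and 0 < q < 1/p. Define on Θ = {(x,t): |x| < (-t)^q, -1 < t < 0} the function u(x,t) = |x|^{p/(p-1)}/(-t)^{pq/(p-1)} - (n/(1-pq)) (p/(p-1))^{p-1} (-t)^{1-pq}. Then u satisfies ∂_t u - Δ_p u ≥ 0 pointwise in Θ ∩ {x ≠ 0}; more precisely ∂_t u(x,t) ≥ n (-t)^{-pq} (p/(p-1))^{p-1} = Δ_p u(x,t). -/

import Mathlib

open Real Filter Set

variable {F : Type*} [NormedAddCommGroup F] [InnerProductSpace ℝ F] [CompleteSpace F]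

lemma hasGradientAt_const_mul_norm_rpow (c α d : ℝ) {y : F} (hy : y ≠ 0) :
    HasGradientAt (fun z : F => c * ‖z‖ ^ α + d) ((c * α * ‖y‖ ^ (α - 2)) • y) y := by
  have hy0 : (0:ℝ) < ‖y‖ := norm_pos_iff.mpr hy
  have hns : (‖y‖ ^ 2 : ℝ) ≠ 0 := by positivity
  have h1 : HasFDerivAt (fun z : F => ‖z‖ ^ 2) (2 • (innerSL ℝ y)) y :=
    (hasStrictFDerivAt_norm_sq y).hasFDerivAt
  have h2 : HasDerivAt (fun s : ℝ => s ^ (α/2)) ((α/2) * (‖y‖ ^ 2) ^ (α/2 - 1)) (‖y‖ ^ 2) :=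
    Real.hasDerivAt_rpow_const (Or.inl hns)
  have h3 := h2.comp_hasFDerivAt y h1
  have h4 := (h3.const_mul c).add_const d
  have hfun : ∀ z : F, c * ((fun s : ℝ => s ^ (α/2)) ∘ fun z : F => ‖z‖ ^ 2) z + d
      = c * ‖z‖ ^ α + d := by
    intro z
    simp only [Function.comp_apply]
    rw [← Real.rpow_natCast ‖z‖ 2, ← Real.rpow_mul (norm_nonneg z)]
    congr 2
    push_cast
    ring
  have h5 : HasFDerivAt (fun z : F => c * ‖z‖ ^ α + d)
      ((InnerProductSpace.toDual ℝ F) ((c * α * ‖y‖ ^ (α - 2)) • y)) y := by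
    have hfeq : (fun z : F => c * ((fun s : ℝ => s ^ (α/2)) ∘ fun z : F => ‖z‖ ^ 2) z + d)
        = fun z : F => c * ‖z‖ ^ α + d := funext hfun
    rw [hfeq] at h4
    refine h4.congr_fderiv ?_
    symm
    ext z
    simp only [InnerProductSpace.toDual_apply_apply, ContinuousLinearMap.smul_apply,
      ContinuousLinearMap.coe_smul', Pi.smul_apply, innerSL_apply_apply, smul_eq_mul,
      real_inner_smul_left]
    have : ((‖y‖ : ℝ) ^ 2) ^ (α/2 - 1) = ‖y‖ ^ (α - 2) := by
      rw [← Real.rpow_natCast ‖y‖ 2, ← Real.rpow_mul (norm_nonneg y)]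
      congr 1
      push_cast
      ring
    rw [this]
    ring
  simpa using h5.hasGradientAt

/-- The p-Laplacian `div(|∇u|^{p-2} ∇u)` computed via Fréchet derivatives. -/
noncomputable def pLap (p : ℝ) {n : ℕ} (u : EuclideanSpace ℝ (Fin n) → ℝ)
    (x : EuclideanSpace ℝ (Fin n)) : ℝ :=
  ∑ i, (inner ℝ (fderiv ℝ (fun y => ‖gradient u y‖ ^ (p - 2) • gradient u y) x
      (EuclideanSpace.single i 1)) (EuclideanSpace.single i (1 : ℝ)) : ℝ)
/-- The irregularity barrier for `1 < p < 2`, `0 < q < 1/p`: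
`u(x,t) = |x|^{p/(p-1)}/(-t)^{pq/(p-1)} - (n/(1-pq))(p/(p-1))^{p-1}(-t)^{1-pq}`
satisfies `∂_t u ≥ n(-t)^{-pq}(p/(p-1))^{p-1} = Δ_p u`, hence `∂_t u - Δ_p u ≥ 0`, in
`Θ ∩ {x ≠ 0}`. -/
theorem irregularity_barrier_singular (p q : ℝ) (hp1 : 1 < p) (hp2 : p < 2)
    (hq0 : 0 < q) (hq : q < 1 / p) (n : ℕ) (hn : 1 ≤ n)
    (Θ : Set (EuclideanSpace ℝ (Fin n) × ℝ))
    (hΘ : Θ = {z : EuclideanSpace ℝ (Fin n) × ℝ |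
      ‖z.1‖ < (-z.2) ^ q ∧ -1 < z.2 ∧ z.2 < 0})
    (u : EuclideanSpace ℝ (Fin n) → ℝ → ℝ)
    (hu : ∀ x t, u x t = ‖x‖ ^ (p / (p - 1)) / (-t) ^ (p * q / (p - 1)) -
      n / (1 - p * q) * (p / (p - 1)) ^ (p - 1) * (-t) ^ (1 - p * q))
    (x : EuclideanSpace ℝ (Fin n)) (t : ℝ) (hmem : (x, t) ∈ Θ) (hx : x ≠ 0) :
    pLap p (fun y => u y t) x = n * (-t) ^ (-(p * q)) * (p / (p - 1)) ^ (p - 1) ∧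
    deriv (u x) t ≥ n * (-t) ^ (-(p * q)) * (p / (p - 1)) ^ (p - 1) ∧
    deriv (u x) t - pLap p (fun y => u y t) x ≥ 0 := by
  subst hΘ
  obtain ⟨-, hT1, hT2⟩ : ‖x‖ < (-t) ^ q ∧ -1 < t ∧ t < 0 := hmem
  have hτ : (0:ℝ) < -t := by linarith
  have hp1' : (0:ℝ) < p - 1 := by linarith
  have hp0 : (0:ℝ) < p := by linarith
  have hpq1 : p * q < 1 := by
    have h := (lt_div_iff₀ hp0).mp hq
    nlinarith
  set α : ℝ := p / (p - 1) with hα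
  have hα0 : 0 < α := div_pos hp0 hp1'
  set β : ℝ := p * q / (p - 1) with hβ
  have hβ0 : 0 < β := div_pos (mul_pos hp0 hq0) hp1'
  set γ : ℝ := 1 - p * q with hγ
  have hγ0 : 0 < γ := by simp only [hγ]; linarith
  set c : ℝ := ((-t) ^ β)⁻¹ with hc
  have hc0 : 0 < c := inv_pos.mpr (rpow_pos_of_pos hτ β)
  set K : ℝ := n / (1 - p * q) * (p / (p - 1)) ^ (p - 1) with hK
  set A : ℝ := c * α with hA
  have hA0 : 0 < A := mul_pos hc0 hα0
  set C : ℝ := A ^ (p - 1) with hC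
  -- the spatial function
  have hufun : (fun y => u y t) = fun y : EuclideanSpace ℝ (Fin n) => c * ‖y‖ ^ α + (-(K * (-t) ^ γ)) := by
    funext y
    rw [hu y t]
    simp only [hc, hα, hβ, hγ, hK]
    ring
  -- pLap computation
  have hplap : pLap p (fun y => u y t) x = n * C := by
    rw [hufun]
    have hgrad : ∀ y : EuclideanSpace ℝ (Fin n), y ≠ 0 →
        gradient (fun z : EuclideanSpace ℝ (Fin n) => c * ‖z‖ ^ α + (-(K * (-t) ^ γ))) y
          = (c * α * ‖y‖ ^ (α - 2)) • y := fun y hy =>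
      (hasGradientAt_const_mul_norm_rpow c α _ hy).gradient
    have hF : ∀ y : EuclideanSpace ℝ (Fin n), y ≠ 0 →
        ‖gradient (fun z : EuclideanSpace ℝ (Fin n) => c * ‖z‖ ^ α + (-(K * (-t) ^ γ))) y‖ ^ (p-2) •
          gradient (fun z : EuclideanSpace ℝ (Fin n) => c * ‖z‖ ^ α + (-(K * (-t) ^ γ))) y
          = C • y := by
      intro y hy
      have hy0 : (0:ℝ) < ‖y‖ := norm_pos_iff.mpr hy
      rw [hgrad y hy, smul_smul]
      congr 1
      have hAy : 0 < A * ‖y‖ ^ (α - 2) := mul_pos hA0 (rpow_pos_of_pos hy0 _)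
      have hnorm : ‖(c * α * ‖y‖ ^ (α - 2)) • y‖ = A * ‖y‖ ^ (α - 1) := by
        rw [norm_smul, Real.norm_eq_abs, abs_of_pos hAy, mul_assoc,
          ← Real.rpow_add_one (ne_of_gt hy0)]
        ring_nf
      rw [hnorm, Real.mul_rpow (le_of_lt hA0) (Real.rpow_nonneg (norm_nonneg y) _),
        ← Real.rpow_mul (norm_nonneg y)]
      have hexp : (α - 1) * (p - 2) + (α - 2) = 0 := by
        simp only [hα]
        field_simp
        ring
      have : A ^ (p - 2) * ‖y‖ ^ ((α - 1) * (p - 2)) * (A * ‖y‖ ^ (α - 2))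
          = A ^ (p - 2) * A * ‖y‖ ^ ((α - 1) * (p - 2) + (α - 2)) := by
        rw [Real.rpow_add hy0]; ring
      rw [this, hexp, Real.rpow_zero, mul_one, hC, ← Real.rpow_add_one (ne_of_gt hA0)]
      ring_nf
    -- eventual equality near x
    have hev : (fun y => ‖gradient (fun z : EuclideanSpace ℝ (Fin n) => c * ‖z‖ ^ α + (-(K * (-t) ^ γ))) y‖ ^ (p-2) •
          gradient (fun z : EuclideanSpace ℝ (Fin n) => c * ‖z‖ ^ α + (-(K * (-t) ^ γ))) y)
        =ᶠ[nhds x] (fun y => C • y) := by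
      filter_upwards [isOpen_compl_singleton.mem_nhds hx] with y hy
      exact hF y hy
    have hid : HasFDerivAt (fun y : EuclideanSpace ℝ (Fin n) => C • y)
        (C • ContinuousLinearMap.id ℝ (EuclideanSpace ℝ (Fin n))) x :=
      (hasFDerivAt_id x).const_smul C
    have hfd : fderiv ℝ (fun y => ‖gradient (fun z : EuclideanSpace ℝ (Fin n) => c * ‖z‖ ^ α + (-(K * (-t) ^ γ))) y‖ ^ (p-2) •
          gradient (fun z : EuclideanSpace ℝ (Fin n) => c * ‖z‖ ^ α + (-(K * (-t) ^ γ))) y) x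
        = C • ContinuousLinearMap.id ℝ (EuclideanSpace ℝ (Fin n)) := by
      rw [hev.fderiv_eq, hid.fderiv]
    rw [pLap, hfd]
    have hterm : ∀ i : Fin n,
        (inner ℝ ((C • ContinuousLinearMap.id ℝ (EuclideanSpace ℝ (Fin n))) (EuclideanSpace.single i 1))
          (EuclideanSpace.single i (1:ℝ)) : ℝ) = C := by
      intro i
      simp [real_inner_smul_left, EuclideanSpace.inner_single_left, EuclideanSpace.single_apply]
    rw [Finset.sum_congr rfl (fun i _ => hterm i), Finset.sum_const]
    simp [mul_comm]
  have hCval : C = (-t) ^ (-(p * q)) * (p / (p - 1)) ^ (p - 1) := by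
    have hc' : c = (-t) ^ (-β) := by rw [hc, Real.rpow_neg (le_of_lt hτ)]
    rw [hC, hA, hc', Real.mul_rpow (Real.rpow_nonneg (le_of_lt hτ) _) (le_of_lt hα0),
      ← Real.rpow_mul (le_of_lt hτ)]
    have : -β * (p - 1) = -(p * q) := by
      rw [hβ]; field_simp
    rw [this, hα]
  -- time derivative
  have hux : u x = fun s : ℝ => ‖x‖ ^ α * ((-s) ^ β)⁻¹ - K * (-s) ^ γ := by
    funext s
    rw [hu x s, div_eq_mul_inv]
  have hneg : HasDerivAt (fun s : ℝ => -s) (-1) t := (hasDerivAt_id t).neg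
  have hb : HasDerivAt (fun s : ℝ => (-s) ^ β) (β * (-t) ^ (β - 1) * (-1)) t :=
    (Real.hasDerivAt_rpow_const (x := -t) (p := β) (Or.inl hτ.ne')).comp t hneg
  have hg : HasDerivAt (fun s : ℝ => (-s) ^ γ) (γ * (-t) ^ (γ - 1) * (-1)) t :=
    (Real.hasDerivAt_rpow_const (x := -t) (p := γ) (Or.inl hτ.ne')).comp t hneg
  have hbinv : HasDerivAt (fun s : ℝ => ((-s) ^ β)⁻¹)
      (-(β * (-t) ^ (β - 1) * (-1)) / ((-t) ^ β) ^ 2) t :=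
    hb.inv (ne_of_gt (rpow_pos_of_pos hτ β))
  have hf : HasDerivAt (fun s : ℝ => ‖x‖ ^ α * ((-s) ^ β)⁻¹ - K * (-s) ^ γ)
      (‖x‖ ^ α * (-(β * (-t) ^ (β - 1) * (-1)) / ((-t) ^ β) ^ 2)
        - K * (γ * (-t) ^ (γ - 1) * (-1))) t :=
    (hbinv.const_mul _).sub (hg.const_mul K)
  have hγ1 : γ - 1 = -(p * q) := by rw [hγ]; ring
  have hKγ : K * γ = n * (p / (p - 1)) ^ (p - 1) := by
    rw [hK, hγ]
    field_simp
    exact div_self (by linarith)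
  have hge : deriv (u x) t ≥ ↑n * (-t) ^ (-(p * q)) * (p / (p - 1)) ^ (p - 1) := by
    rw [hux, hf.deriv]
    have h1 : 0 ≤ ‖x‖ ^ α * (-(β * (-t) ^ (β - 1) * (-1)) / ((-t) ^ β) ^ 2) := by
      apply mul_nonneg (Real.rpow_nonneg (norm_nonneg x) _)
      apply div_nonneg _ (sq_nonneg _)
      have := rpow_pos_of_pos hτ (β - 1)
      nlinarith
    have h2 : -(K * (γ * (-t) ^ (γ - 1) * (-1))) = ↑n * (-t) ^ (-(p * q)) * (p / (p - 1)) ^ (p - 1) := by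
      have h3 : -(K * (γ * (-t) ^ (γ - 1) * (-1))) = (K * γ) * (-t) ^ (γ - 1) := by ring
      rw [h3, hKγ, hγ1]
      ring
    linarith
  have hplap' : pLap p (fun y => u y t) x = ↑n * (-t) ^ (-(p * q)) * (p / (p - 1)) ^ (p - 1) := by
    rw [hplap, hCval]; ring
  exact ⟨hplap', hge, by rw [hplap']; linarith⟩
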